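/- arXiv:2111.01852 — 2 statements merged into one kernel-verified Lean document; each statement's English description precedes it below -/
import Mathlib

section
/- Let H be a finite group, K ≤ Aut(H), and let G = H ⋊ K act on the set H, where H acts on itself by right multiplication and K acts by its automorphisms. Then a subset B of H containing the identity is a block of the action of G if and only if B is a K-invariant subgroup of H. -/
/-- The translates of a subset of `H` under the action of the semidirect
product `G = H ⋊ K` (with `H` acting by right multiplication and `K ≤ Aut H`
by automorphisms) are exactly the images under maps `x ↦ σ x * h`.
A set is a block iff every such translate equals it or is disjoint from it. -/
theorem stmt11 {H : Type*} [Group H] [Finite H] (K : Subgroup (MulAut H))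
    (B : Set H) (h1 : (1 : H) ∈ B) :
    (∀ σ ∈ K, ∀ h : H, (fun x => σ x * h) '' B = B ∨
        Disjoint ((fun x => σ x * h) '' B) B) ↔
      ∃ L : Subgroup H, (∀ σ ∈ K, ∀ x ∈ L, σ x ∈ L) ∧ B = (L : Set H) := by
  constructor
  · intro hb
    have key : ∀ b ∈ B, ∀ a ∈ B, a * b⁻¹ ∈ B := by
      intro b hbB a haB
      rcases hb 1 K.one_mem b⁻¹ with h | h
      · rw [← h]; exact ⟨a, haB, by simp⟩
      · exfalso
        have h1' : (1 : H) ∈ (fun x => (1 : MulAut H) x * b⁻¹) '' B :=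
          ⟨b, hbB, by simp⟩
        exact Set.disjoint_left.mp h h1' h1
    have invmem : ∀ b ∈ B, b⁻¹ ∈ B := fun b hb' => by
      simpa using key b hb' 1 h1
    refine ⟨{ carrier := B
              one_mem' := h1
              inv_mem' := fun {b} hb' => invmem b hb'
              mul_mem' := fun {a b} ha hb' => by
                simpa using key b⁻¹ (invmem b hb') a ha }, ?_, rfl⟩
    intro σ hσ x hx
    rcases hb σ hσ 1 with h | h
    · have : σ x * 1 ∈ (fun x => σ x * 1) '' B := ⟨x, hx, rfl⟩
      rw [h] at this
      simpa using this
    · exfalso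
      have h1' : (1 : H) ∈ (fun x => σ x * 1) '' B := ⟨1, h1, by simp⟩
      exact Set.disjoint_left.mp h h1' h1
  · rintro ⟨L, hK, rfl⟩
    intro σ hσ h
    by_cases hd : Disjoint ((fun x => σ x * h) '' (L : Set H)) (L : Set H)
    · exact Or.inr hd
    · left
      rcases Set.not_disjoint_iff.mp hd with ⟨y, ⟨a, haL, rfl⟩, hyL⟩
      have hσa : σ a ∈ L := hK σ hσ a haL
      have hhL : h ∈ L := by
        have := mul_mem (inv_mem hσa) hyL
        simpa using this
      ext z
      constructor
      · rintro ⟨x, hxL, rfl⟩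
        exact mul_mem (hK σ hσ x hxL) hhL
      · intro hz
        refine ⟨σ⁻¹ (z * h⁻¹), ?_, by simp⟩
        exact hK σ⁻¹ (K.inv_mem hσ) _ (mul_mem hz (inv_mem hhL))
end

section
/- Let H be a nontrivial finite group, K a nontrivial finite group acting fixed-point-freely by automorphisms on H, and G = H ⋊ K. Then for every g ∈ G \ H, the entire coset gH is contained in the conjugacy class of g in G. -/
theorem stmt13 {H K : Type*} [Group H] [Finite H] [Nontrivial H]
    [Group K] [Finite K] [Nontrivial K] [MulDistribMulAction K H]
    (hfpf : ∀ k : K, k ≠ 1 → ∀ h : H, k • h = h → h = 1)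
    (g : SemidirectProduct H K (MulDistribMulAction.toMulAut K H))
    (hg : g ∉ (SemidirectProduct.inl.range :
      Subgroup (SemidirectProduct H K (MulDistribMulAction.toMulAut K H)))) :
    ∀ h : H, IsConj g (g * SemidirectProduct.inl h) := by
  intro h
  set k := g.right with hkdef
  have hk : k ≠ 1 := by
    intro h1
    apply hg
    rw [SemidirectProduct.range_inl_eq_ker_rightHom]
    simpa [SemidirectProduct.rightHom_eq_right] using h1
  have hf : Function.Bijective (fun y : H => y * k • y⁻¹) := by
    refine Finite.injective_iff_bijective.mp ?_
    intro y z hyz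
    simp only [smul_inv'] at hyz
    have h2 : k • (z⁻¹ * y) = z⁻¹ * y := by
      rw [smul_mul', smul_inv']
      have := congrArg (fun t => z⁻¹ * t * (k • y)) hyz
      simp only [mul_assoc, inv_mul_cancel, mul_one, inv_mul_cancel_left] at this
      rw [← this]
    have := hfpf k hk _ h2
    have : z * (z⁻¹ * y) = z * 1 := by rw [this]
    simpa using this
  obtain ⟨x, hx⟩ := hf.surjective g.left
  obtain ⟨y, hy⟩ := hf.surjective (k • (x⁻¹ * h * x))
  simp only at hx hy
  have hy' : (k • x) * (y * k • y⁻¹) * (k • x)⁻¹ = k • h := by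
    rw [hy, ← smul_inv', ← smul_mul', ← smul_mul']
    congr 1
    group
  have key : (x * y * x⁻¹) * g.left * k • (x * y * x⁻¹)⁻¹ = g.left * (k • h) := by
    rw [← hx, ← hy']
    simp only [mul_inv_rev, inv_inv, smul_mul', smul_inv']
    group
  rw [isConj_iff]
  refine ⟨SemidirectProduct.inl (x * y * x⁻¹), ?_⟩
  ext
  · simpa [mul_assoc] using key
  · simp
end
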